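/- For two closed balls of radius $r$ in $\mathbb{R}^d$ with centers $c_1, c_2$ at distance $t \in [0, 2r]$, the volume of their union satisfies $\mathrm{Vol}(B_r(c_1) \cup B_r(c_2)) \ge \omega_d r^d + \omega_{d-1} r^{d-1} t - C r^{d-2} t^2$ for a constant $C = C(d) > 0$ depending only on $d$. -/

import Mathlib

open MeasureTheory
open Metric

/-- The Lebesgue volume of the unit ball in `ℝ^n`. -/
noncomputable def unitBallVol (n : ℕ) : ℝ :=
  (volume (Metric.ball (0 : EuclideanSpace ℝ (Fin n)) 1)).toReal

private lemma aux_pow (k : ℕ) : ∀ {a b : ℝ}, 0 ≤ b → b ≤ a →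
    a * (a ^ k - b ^ k) ≤ k * (a - b) * a ^ k := by
  induction k with
  | zero => intro a b hb hba; simp
  | succ k ih =>
    intro a b hb hba
    have h1 := ih hb hba
    have h2 : b ^ k ≤ a ^ k := pow_le_pow_left₀ hb hba k
    have ha : 0 ≤ a := hb.trans hba
    have h3 : 0 ≤ a - b := sub_nonneg.2 hba
    have h4 := mul_le_mul_of_nonneg_left h1 ha
    have h5 : a * b ^ k ≤ a * a ^ k := mul_le_mul_of_nonneg_left h2 ha
    simp only [pow_succ]
    push_cast
    nlinarith [mul_le_mul_of_nonneg_right h5 h3]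

private lemma vol_union_eq (n : ℕ) (r t : ℝ) (c₁ c₂ : EuclideanSpace ℝ (Fin (n+1)))
    (hdist : dist c₁ c₂ = t) (ht : 0 ≤ t) :
    volume (closedBall c₁ r ∪ closedBall c₂ r) =
      volume (closedBall (0 : EuclideanSpace ℝ (Fin (n+1))) r ∪
        closedBall (t • (EuclideanSpace.single 0 1 : EuclideanSpace ℝ (Fin (n+1)))) r) := by
  set e : EuclideanSpace ℝ (Fin (n+1)) := EuclideanSpace.single 0 1 with he
  have hne : ‖t • e‖ = ‖c₂ - c₁‖ := by
    rw [norm_smul, he, EuclideanSpace.norm_single, ← dist_eq_norm', hdist, Real.norm_eq_abs,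
      abs_of_nonneg ht, norm_one, mul_one]
  set f := (Submodule.reflection (ℝ ∙ (t • e - (c₂ - c₁)))ᗮ) with hfdef
  have hf : f (t • e) = c₂ - c₁ := Submodule.reflection_sub hne
  have hmp : MeasurePreserving (fun x => c₁ + f x) volume volume :=
    (measurePreserving_add_left volume c₁).comp f.measurePreserving
  rw [← hmp.measure_preimage
    ((measurableSet_closedBall.union measurableSet_closedBall).nullMeasurableSet)]
  have e1 : ∀ x, dist (c₁ + f x) c₁ = dist x 0 := fun x => by
    rw [dist_eq_norm, add_sub_cancel_left, f.norm_map, dist_zero_right]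
  have e2 : ∀ x, dist (c₁ + f x) c₂ = dist x (t • e) := fun x => by
    rw [dist_eq_norm, dist_eq_norm]
    have h3 : c₁ + f x - c₂ = f x - (c₂ - c₁) := by abel
    rw [h3, ← hf, ← map_sub, f.norm_map]
  congr 1
  ext x
  simp only [Set.preimage_union, Set.mem_union, Set.mem_preimage, mem_closedBall, e1, e2]

private lemma vol_ball_set (n : ℕ) (ρ : ℝ) (hρ : 0 ≤ ρ) :
    volume {y : Fin n → ℝ | ∑ j, y j ^ 2 ≤ ρ ^ 2}
      = volume (closedBall (0 : EuclideanSpace ℝ (Fin n)) ρ) := by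
  have hYm : MeasurableSet {y : Fin n → ℝ | ∑ j, y j ^ 2 ≤ ρ ^ 2} :=
    measurableSet_le (Finset.measurable_sum _ fun j _ => (measurable_pi_apply j).pow_const 2)
      measurable_const
  rw [← (EuclideanSpace.volume_preserving_symm_measurableEquiv_toLp (Fin n)).measure_preimage
    hYm.nullMeasurableSet]
  congr 1
  ext y
  simp only [Set.mem_preimage, Set.mem_setOf_eq, MeasurableEquiv.coe_toLp_symm,
    mem_closedBall_zero_iff, EuclideanSpace.norm_eq, Real.norm_eq_abs,
    sq_abs]
  constructor
  · intro h
    have h0 : (0:ℝ) ≤ ∑ j, y j ^ 2 := Finset.sum_nonneg fun j _ => sq_nonneg _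
    calc Real.sqrt (∑ j, y j ^ 2) ≤ Real.sqrt (ρ ^ 2) := Real.sqrt_le_sqrt h
    _ = ρ := Real.sqrt_sq hρ
  · intro h
    have := Real.sq_sqrt (Finset.sum_nonneg fun j (_ : j ∈ Finset.univ) => sq_nonneg (y j))
    nlinarith [Real.sqrt_nonneg (∑ j, y j ^ 2)]

private lemma vol_cyl (n : ℕ) (t ρ : ℝ) (hρ : 0 ≤ ρ) :
    volume {x : EuclideanSpace ℝ (Fin (n+1)) |
        x 0 ∈ Set.Icc 0 t ∧ ∑ j : Fin n, x j.succ ^ 2 ≤ ρ ^ 2}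
      = ENNReal.ofReal t * volume (closedBall (0 : EuclideanSpace ℝ (Fin n)) ρ) := by
  set Y : Set (Fin n → ℝ) := {y | ∑ j, y j ^ 2 ≤ ρ ^ 2} with hY
  have hYm : MeasurableSet Y :=
    measurableSet_le (Finset.measurable_sum _ fun j _ => (measurable_pi_apply j).pow_const 2)
      measurable_const
  have hmp := (volume_preserving_piFinSuccAbove (fun _ : Fin (n+1) => ℝ) 0).comp
    (EuclideanSpace.volume_preserving_symm_measurableEquiv_toLp (Fin (n+1)))
  have hset : {x : EuclideanSpace ℝ (Fin (n+1)) |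
        x 0 ∈ Set.Icc 0 t ∧ ∑ j : Fin n, x j.succ ^ 2 ≤ ρ ^ 2} =
      (⇑(MeasurableEquiv.piFinSuccAbove (fun _ : Fin (n+1) => ℝ) 0) ∘
        ⇑(MeasurableEquiv.toLp 2 (Fin (n+1) → ℝ)).symm) ⁻¹' (Set.Icc 0 t ×ˢ Y) := by
    ext x
    simp [Y, MeasurableEquiv.piFinSuccAbove, Fin.zero_succAbove, Set.mem_prod, Fin.tail,
      MeasurableEquiv.coe_toLp_symm]
  rw [hset, hmp.measure_preimage ((measurableSet_Icc.prod hYm).nullMeasurableSet),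
    Measure.volume_eq_prod, Measure.prod_prod, Real.volume_Icc, sub_zero, vol_ball_set n ρ hρ]

private lemma half_ball (n : ℕ) (r : ℝ) :
    volume (closedBall (0 : EuclideanSpace ℝ (Fin (n+1))) r) ≤
      volume (closedBall (0 : EuclideanSpace ℝ (Fin (n+1))) r ∩ {x | x 0 < 0}) +
      volume (closedBall (0 : EuclideanSpace ℝ (Fin (n+1))) r ∩ {x | 0 < x 0}) := by
  set E := EuclideanSpace ℝ (Fin (n+1))
  have hH : volume {x : E | x 0 = 0} = 0 := by
    have h1 : {x : E | x 0 = 0} =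
        (LinearMap.ker (EuclideanSpace.projₗ (𝕜 := ℝ) (0 : Fin (n+1))) : Set E) := by
      ext x; exact Iff.rfl
    rw [h1]
    refine Measure.addHaar_submodule volume _ fun h => ?_
    have : (EuclideanSpace.single (0 : Fin (n+1)) (1:ℝ)) ∈
        LinearMap.ker (EuclideanSpace.projₗ (𝕜 := ℝ) (0 : Fin (n+1))) := h ▸ Submodule.mem_top
    simp [LinearMap.mem_ker, EuclideanSpace.single_apply] at this
  calc volume (closedBall (0 : EuclideanSpace ℝ (Fin (n+1))) r)
      ≤ volume ((closedBall (0 : EuclideanSpace ℝ (Fin (n+1))) r ∩ {x | x 0 < 0}) ∪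
          ((closedBall (0 : EuclideanSpace ℝ (Fin (n+1))) r ∩ {x | 0 < x 0}) ∪ {x : E | x 0 = 0})) := by
        refine measure_mono fun x hx => ?_
        rcases lt_trichotomy (x 0) 0 with h | h | h
        · exact Or.inl ⟨hx, h⟩
        · exact Or.inr (Or.inr h)
        · exact Or.inr (Or.inl ⟨hx, h⟩)
    _ ≤ volume (closedBall (0 : EuclideanSpace ℝ (Fin (n+1))) r ∩ {x | x 0 < 0}) +
          (volume (closedBall (0 : EuclideanSpace ℝ (Fin (n+1))) r ∩ {x | 0 < x 0}) + volume {x : E | x 0 = 0}) :=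
        le_trans (measure_union_le _ _) (by gcongr; exact measure_union_le _ _)
    _ = _ := by rw [hH, add_zero]

set_option maxHeartbeats 2000000 in
/-- Lower bound for the volume of a union of two balls of radius `r` in `ℝ^d` with
centers at distance `t ∈ [0, 2r]`:
`Vol(B_r(c₁) ∪ B_r(c₂)) ≥ ω_d r^d + ω_{d-1} r^{d-1} t - C r^{d-2} t²`. -/
theorem stmt_11 (d : ℕ) (hd : 1 ≤ d) :
    ∃ C : ℝ, 0 < C ∧ ∀ (r t : ℝ) (c₁ c₂ : EuclideanSpace ℝ (Fin d)),
      0 < r → dist c₁ c₂ = t → 0 ≤ t → t ≤ 2 * r →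
      unitBallVol d * r ^ d + unitBallVol (d - 1) * r ^ (d - 1) * t
          - C * r ^ ((d : ℝ) - 2) * t ^ 2 ≤
        (volume (Metric.closedBall c₁ r ∪ Metric.closedBall c₂ r)).toReal := by
  obtain ⟨n, rfl⟩ : ∃ n, d = n + 1 := ⟨d - 1, (Nat.succ_pred_eq_of_pos hd).symm⟩
  have hω : (0:ℝ) ≤ unitBallVol n := ENNReal.toReal_nonneg
  refine ⟨unitBallVol n * n / 2 + 1, by positivity, ?_⟩
  intro r t c₁ c₂ hr hdist ht ht2
  set ω := unitBallVol n with hωdef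
  set C : ℝ := ω * n / 2 + 1 with hC
  set e : EuclideanSpace ℝ (Fin (n+1)) := EuclideanSpace.single 0 1 with he
  set ρ : ℝ := Real.sqrt (r^2 - t^2/4) with hρ
  have hrt : t^2 ≤ 4*r^2 := by nlinarith
  have hρsq : ρ^2 = r^2 - t^2/4 := Real.sq_sqrt (by nlinarith)
  have hρ0 : (0:ℝ) ≤ ρ := Real.sqrt_nonneg _
  have hρr : ρ ≤ r := by nlinarith [hρsq, hρ0, hr]
  have hte : ∀ i, (t • e) i = if i = 0 then t else 0 := by
    intro i
    simp [he, PiLp.smul_apply, smul_eq_mul, EuclideanSpace.single_apply, mul_ite]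
  -- the pieces
  set A : Set (EuclideanSpace ℝ (Fin (n+1))) := closedBall 0 r ∩ {x | x 0 < 0} with hA
  set A' : Set (EuclideanSpace ℝ (Fin (n+1))) := closedBall 0 r ∩ {x | 0 < x 0} with hA'
  set Z : Set (EuclideanSpace ℝ (Fin (n+1))) := {x : EuclideanSpace ℝ (Fin (n+1)) | x 0 ∈ Set.Icc 0 t ∧ ∑ j : Fin n, x j.succ ^ 2 ≤ ρ ^ 2} with hZ
  set B : Set (EuclideanSpace ℝ (Fin (n+1))) := closedBall (t • e) r ∩ {x | t < x 0} with hB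
  have hm0 : Measurable fun x : EuclideanSpace ℝ (Fin (n+1)) => x 0 :=
    (EuclideanSpace.proj (0 : Fin (n+1)) (𝕜 := ℝ)).continuous.measurable
  have hmZ : MeasurableSet Z := by
    exact MeasurableSet.inter (hm0 measurableSet_Icc)
      (measurableSet_le (Finset.measurable_sum _ fun (j : Fin n) _ =>
        ((EuclideanSpace.proj (j.succ) (𝕜 := ℝ)).continuous.measurable).pow_const 2)
        measurable_const)
  have hmB : MeasurableSet B :=
    measurableSet_closedBall.inter (measurableSet_lt measurable_const hm0)
  -- Z is inside the union of the two balls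
  have hZsub : Z ⊆ closedBall (0 : EuclideanSpace ℝ (Fin (n+1))) r ∪ closedBall (t • e) r := by
    rintro x ⟨⟨hx0, hxt⟩, hy⟩
    by_cases hc : x 0 ≤ t/2
    · left
      rw [mem_closedBall_zero_iff, EuclideanSpace.norm_eq]
      have hsum : ∑ i, ‖x i‖^2 = x 0 ^2 + ∑ j : Fin n, x j.succ ^2 := by
        rw [Fin.sum_univ_succ]
        simp [Real.norm_eq_abs, sq_abs]
      rw [hsum]
      calc Real.sqrt (x 0 ^2 + ∑ j : Fin n, x j.succ ^2) ≤ Real.sqrt (r^2) :=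
            Real.sqrt_le_sqrt (by nlinarith)
      _ = r := Real.sqrt_sq hr.le
    · right
      push_neg at hc
      rw [mem_closedBall, EuclideanSpace.dist_eq]
      have hsum : ∑ i, dist (x i) ((t • e) i) ^ 2
          = (x 0 - t)^2 + ∑ j : Fin n, x j.succ ^2 := by
        rw [Fin.sum_univ_succ]
        congr 1
        · rw [hte 0, if_pos rfl, Real.dist_eq, sq_abs]
        · refine Finset.sum_congr rfl fun j _ => ?_
          rw [hte j.succ, if_neg (Fin.succ_ne_zero j), Real.dist_eq, sub_zero, sq_abs]
      rw [hsum]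
      calc Real.sqrt ((x 0 - t)^2 + ∑ j : Fin n, x j.succ ^2) ≤ Real.sqrt (r^2) :=
            Real.sqrt_le_sqrt (by nlinarith)
      _ = r := Real.sqrt_sq hr.le
  -- disjointness
  have hd1 : Disjoint A Z := by
    rw [Set.disjoint_left]
    rintro x ⟨_, hx⟩ ⟨⟨h0, _⟩, _⟩
    exact absurd hx (not_lt.2 h0)
  have hd2 : Disjoint (A ∪ Z) B := by
    rw [Set.disjoint_left]
    rintro x hx ⟨_, hxB⟩
    rcases hx with ⟨_, hx⟩ | ⟨⟨_, hx⟩, _⟩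
    · exact absurd hxB (not_lt.2 (le_of_lt (hx.trans_le ht)))
    · exact absurd hxB (not_lt.2 hx)
  -- translation: volume B = volume A'
  have hBA' : volume B = volume A' := by
    have hτ : MeasurePreserving (fun x : EuclideanSpace ℝ (Fin (n+1)) => x + t • e) volume volume :=
      measurePreserving_add_right volume (t • e)
    rw [← hτ.measure_preimage hmB.nullMeasurableSet]
    congr 1
    ext x
    have e3 : dist (x + t • e) (t • e) = dist x 0 := by
      simpa using dist_add_right x 0 (t • e)
    have e4 : (x + t • e) 0 = x 0 + t := by
      simp [PiLp.add_apply, hte 0]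
    simp only [Set.mem_preimage, hB, hA', Set.mem_inter_iff, mem_closedBall, Set.mem_setOf_eq,
      e3, e4]
    constructor
    · rintro ⟨h1, h2⟩; exact ⟨h1, by linarith⟩
    · rintro ⟨h1, h2⟩; exact ⟨h1, by linarith⟩
  -- main ENNReal estimate
  have hABZ : volume (closedBall (0 : EuclideanSpace ℝ (Fin (n+1))) r) + volume Z ≤
      volume (closedBall (0 : EuclideanSpace ℝ (Fin (n+1))) r ∪ closedBall (t • e) r) := by
    calc volume (closedBall (0 : EuclideanSpace ℝ (Fin (n+1))) r) + volume Z
        ≤ (volume A + volume A') + volume Z := add_le_add_left (half_ball n r) _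
      _ = (volume A + volume Z) + volume B := by rw [hBA']; ring
      _ = volume (A ∪ Z) + volume B := by rw [measure_union hd1 hmZ]
      _ = volume ((A ∪ Z) ∪ B) := (measure_union hd2 hmB).symm
      _ ≤ volume (closedBall (0 : EuclideanSpace ℝ (Fin (n+1))) r ∪ closedBall (t • e) r) := by
          refine measure_mono (Set.union_subset (Set.union_subset ?_ hZsub) ?_)
          · exact Set.inter_subset_left.trans Set.subset_union_left
          · exact Set.inter_subset_left.trans Set.subset_union_right
  have hmain : ENNReal.ofReal (r^(n+1)) * volume (ball (0 : EuclideanSpace ℝ (Fin (n+1))) 1)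
        + ENNReal.ofReal t * (ENNReal.ofReal (ρ^n) * volume (ball (0:EuclideanSpace ℝ (Fin n)) 1))
      ≤ volume (closedBall c₁ r ∪ closedBall c₂ r) := by
    rw [vol_union_eq n r t c₁ c₂ hdist ht]
    have hv1 : volume (closedBall (0 : EuclideanSpace ℝ (Fin (n+1))) r)
        = ENNReal.ofReal (r^(n+1)) * volume (ball (0 : EuclideanSpace ℝ (Fin (n+1))) 1) := by
      rw [Measure.addHaar_closedBall volume (0 : EuclideanSpace ℝ (Fin (n+1))) hr.le, finrank_euclideanSpace_fin]
    have hv2 : volume (closedBall (0:EuclideanSpace ℝ (Fin n)) ρ)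
        = ENNReal.ofReal (ρ^n) * volume (ball (0:EuclideanSpace ℝ (Fin n)) 1) := by
      rw [Measure.addHaar_closedBall volume _ hρ0, finrank_euclideanSpace_fin]
    have hv3 : volume Z = ENNReal.ofReal t *
        (ENNReal.ofReal (ρ^n) * volume (ball (0:EuclideanSpace ℝ (Fin n)) 1)) := by
      rw [hZ, vol_cyl n t ρ hρ0, hv2]
    rw [← hv1, ← hv3]
    exact hABZ
  -- pass to real numbers
  have hfinU : volume (closedBall c₁ r ∪ closedBall c₂ r) ≠ ⊤ :=
    (measure_union_lt_top measure_closedBall_lt_top measure_closedBall_lt_top).ne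
  have hb1 : volume (ball (0 : EuclideanSpace ℝ (Fin (n+1))) 1) ≠ ⊤ := measure_ball_lt_top.ne
  have hb2 : volume (ball (0:EuclideanSpace ℝ (Fin n)) 1) ≠ ⊤ := measure_ball_lt_top.ne
  have hX1 : ENNReal.ofReal (r^(n+1)) * volume (ball (0 : EuclideanSpace ℝ (Fin (n+1))) 1) ≠ ⊤ :=
    ENNReal.mul_ne_top ENNReal.ofReal_ne_top hb1
  have hX2 : ENNReal.ofReal t *
      (ENNReal.ofReal (ρ^n) * volume (ball (0:EuclideanSpace ℝ (Fin n)) 1)) ≠ ⊤ :=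
    ENNReal.mul_ne_top ENNReal.ofReal_ne_top (ENNReal.mul_ne_top ENNReal.ofReal_ne_top hb2)
  have hreal : r^(n+1) * unitBallVol (n+1) + t * (ρ^n * ω)
      ≤ (volume (closedBall c₁ r ∪ closedBall c₂ r)).toReal := by
    have := (ENNReal.toReal_le_toReal (ENNReal.add_ne_top.2 ⟨hX1, hX2⟩) hfinU).2 hmain
    rw [ENNReal.toReal_add hX1 hX2, ENNReal.toReal_mul, ENNReal.toReal_mul,
      ENNReal.toReal_mul, ENNReal.toReal_ofReal (by positivity),
      ENNReal.toReal_ofReal ht, ENNReal.toReal_ofReal (by positivity)] at this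
    exact this
  -- final arithmetic
  have h1 : r * (r^n - ρ^n) ≤ n*(r-ρ)*r^n := aux_pow n hρ0 hρr
  have h2 : 4*r*(r-ρ) ≤ t^2 := by nlinarith [hρsq, mul_nonneg hρ0 (sub_nonneg.2 hρr)]
  have h3 : t * (r-ρ) ≤ t^2/2 := by
    nlinarith [mul_le_mul_of_nonneg_right ht2 (sub_nonneg.2 hρr), h2]
  have key : ω * t * (r^n - ρ^n) * r ≤ C * r^n * t^2 := by
    calc ω*t*(r^n-ρ^n)*r = (ω*t)*(r*(r^n-ρ^n)) := by ring
      _ ≤ (ω*t)*(n*(r-ρ)*r^n) := mul_le_mul_of_nonneg_left h1 (mul_nonneg hω ht)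
      _ = (ω*(n:ℝ)*r^n)*(t*(r-ρ)) := by ring
      _ ≤ (ω*(n:ℝ)*r^n)*(t^2/2) := by
          refine mul_le_mul_of_nonneg_left h3 (by positivity)
      _ ≤ C*r^n*t^2 := by
          rw [hC]
          nlinarith [mul_nonneg (pow_nonneg hr.le n) (sq_nonneg t)]
  have hcast : ((n+1 : ℕ) : ℝ) - 2 = (n:ℝ) - 1 := by push_cast; ring
  have hrpow : r ^ (((n+1 : ℕ) : ℝ) - 2) = r^n / r := by
    rw [hcast, Real.rpow_sub hr, Real.rpow_natCast, Real.rpow_one]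
  have hdiv : ω*t*(r^n-ρ^n) ≤ C*r^n*t^2/r := (le_div_iff₀ hr).2 key
  have hCr : C*(r^n/r)*t^2 = C*r^n*t^2/r := by ring
  simp only [Nat.add_sub_cancel]
  rw [hrpow]
  nlinarith [hreal, hdiv, hCr]
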